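/- Let TR₁>0, α₁∈ℝ, φ₁∈ℝ, M₀∈ℝ³, and let M₁(θ) = E₁(TR₁,θ)R_{φ₁}R_x(α₁)R_{φ₁}ᵀM₀ + E₂(TR₁,θ)M_e be the first step of the IR-bSSFP discrete Bloch dynamics, with (Fréchet) derivative M₁′(θ)h = h₁·(U₁(1)M₀ − (TR₁/T₁²)e^{−TR₁/T₁}M_e) + h₂·U₂(1)M₀ for h=(h₁,h₂)∈ℝ², where U₁(1)=diag(0,0,(TR₁/T₁²)e^{−TR₁/T₁})R(α₁), U₂(1)=diag((TR₁/T₂²)e^{−TR₁/T₂},(TR₁/T₂²)e^{−TR₁/T₂},0)R(α₁), R(α₁)=R_{φ₁}R_x(α₁)R_{φ₁}ᵀ. Then there exists a constant C>0, depending only on TR₁ and ‖M₀‖ (and not on θ or h), such that for all θ∈(0,∞)² and all h∈ℝ² with θ+h∈(0,∞)²: ‖M₁(θ+h) − M₁(θ) − M₁′(θ)h‖ ≤ C‖h‖². -/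

import Mathlib

open Matrix

/-- The equilibrium magnetization `M_e = (0,0,1)`. -/
noncomputable def Me : Fin 3 → ℝ := ![0, 0, 1]

/-- `E₁(TR,θ) = diag(e^{−TR/T₂}, e^{−TR/T₂}, e^{−TR/T₁})`. -/
noncomputable def E1 (TR T1 T2 : ℝ) : Matrix (Fin 3) (Fin 3) ℝ :=
  Matrix.diagonal ![Real.exp (-TR / T2), Real.exp (-TR / T2), Real.exp (-TR / T1)]

/-- `E₂(TR,θ) = 1 − e^{−TR/T₁}`. -/
noncomputable def E2 (TR T1 : ℝ) : ℝ := 1 - Real.exp (-TR / T1)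

/-- The phase-shift rotation `R_φ`. -/
noncomputable def Rphi (φ : ℝ) : Matrix (Fin 3) (Fin 3) ℝ :=
  !![Real.cos φ, Real.sin φ, 0; -Real.sin φ, Real.cos φ, 0; 0, 0, 1]

/-- The flip-angle rotation `R_x(α)`. -/
noncomputable def Rx (α : ℝ) : Matrix (Fin 3) (Fin 3) ℝ :=
  !![1, 0, 0; 0, Real.cos α, Real.sin α; 0, -Real.sin α, Real.cos α]

/-- `R(α) := R_φ R_x(α) R_φᵀ`. -/
noncomputable def Rmat (φ α : ℝ) : Matrix (Fin 3) (Fin 3) ℝ := Rphi φ * Rx α * (Rphi φ)ᵀ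

/-- The IR-bSSFP discrete Bloch dynamics:
`M₀` given, `M_ℓ = E₁(TR_ℓ,θ) R(α_ℓ) M_{ℓ−1} + E₂(TR_ℓ,θ) M_e`. -/
noncomputable def Mseq (α φ TR : ℕ → ℝ) (T1 T2 : ℝ) (M0 : Fin 3 → ℝ) : ℕ → Fin 3 → ℝ
  | 0 => M0
  | ℓ + 1 =>
      (E1 (TR (ℓ + 1)) T1 T2 * Rmat (φ (ℓ + 1)) (α (ℓ + 1))) *ᵥ Mseq α φ TR T1 T2 M0 ℓ
        + E2 (TR (ℓ + 1)) T1 • Me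

/-- `U₁(1)` as in the derivative of the first IR-bSSFP step. -/
noncomputable def U1 (TRl φl αl T1 : ℝ) : Matrix (Fin 3) (Fin 3) ℝ :=
  Matrix.diagonal ![0, 0, TRl / T1 ^ 2 * Real.exp (-TRl / T1)] * Rmat φl αl

/-- `U₂(1)` as in the derivative of the first IR-bSSFP step. -/
noncomputable def U2 (TRl φl αl T2 : ℝ) : Matrix (Fin 3) (Fin 3) ℝ :=
  Matrix.diagonal ![TRl / T2 ^ 2 * Real.exp (-TRl / T2),
    TRl / T2 ^ 2 * Real.exp (-TRl / T2), 0] * Rmat φl αl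

/-- The first step of the IR-bSSFP dynamics,
`M₁(θ) = E₁(TR₁,θ) R_{φ₁} R_x(α₁) R_{φ₁}ᵀ M₀ + E₂(TR₁,θ) M_e`. -/
noncomputable def M1fun (TR1 α1 φ1 : ℝ) (M0 : Fin 3 → ℝ) (T1 T2 : ℝ) : Fin 3 → ℝ :=
  (E1 TR1 T1 T2 * Rmat φ1 α1) *ᵥ M0 + E2 TR1 T1 • Me

/-- The Euclidean norm on `ℝ³`. -/
noncomputable def enorm3 (v : Fin 3 → ℝ) : ℝ := Real.sqrt (∑ i, v i ^ 2)

/-- The Euclidean norm on `ℝ²`. -/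
noncomputable def enorm2 (v : ℝ × ℝ) : ℝ := Real.sqrt (v.1 ^ 2 + v.2 ^ 2)


lemma pow_exp_le (u : ℝ) (hu : 0 ≤ u) (n : ℕ) : u ^ n * Real.exp (-u) ≤ ((Nat.factorial n : ℕ) : ℝ) := by
  have h := Real.pow_div_factorial_le_exp u hu n
  have hfac : (0:ℝ) < ((Nat.factorial n : ℕ) : ℝ) := by positivity
  rw [Real.exp_neg]; rw [div_le_iff₀ hfac] at h
  calc u ^ n * (Real.exp u)⁻¹ ≤ (((Nat.factorial n : ℕ) : ℝ) * Real.exp u) * (Real.exp u)⁻¹ := by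
        gcongr; linarith [h]
      _ = ((Nat.factorial n : ℕ) : ℝ) := by field_simp

lemma gderiv (TR s : ℝ) (hs : 0 < s) :
    HasDerivAt (fun t : ℝ => Real.exp (-TR / t)) (TR / s ^ 2 * Real.exp (-TR / s)) s := by
  have h1 : HasDerivAt (fun t : ℝ => -TR / t) (TR / s ^ 2) s := by
    have := (hasDerivAt_inv (ne_of_gt hs)).const_mul (-TR)
    refine this.congr_deriv ?_
    ring
  have := h1.exp
  convert this using 1
  ring

lemma gderiv2 (TR s : ℝ) (hs : 0 < s) :
    HasDerivAt (fun t : ℝ => TR / t ^ 2 * Real.exp (-TR / t))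
      ((TR ^ 2 / s ^ 4 - 2 * TR / s ^ 3) * Real.exp (-TR / s)) s := by
  have h1 : HasDerivAt (fun t : ℝ => TR / t ^ 2) (-2 * TR / s ^ 3) s := by
    have h2 : HasDerivAt (fun t : ℝ => (t ^ 2)⁻¹) (-(2 * s) / (s ^ 2) ^ 2) s := by
      have := (hasDerivAt_pow 2 s).inv (by positivity)
      refine this.congr_deriv ?_
      norm_num
    have := h2.const_mul TR
    refine this.congr_deriv ?_
    field_simp
  have := h1.mul (gderiv TR s hs)
  refine this.congr_deriv ?_
  field_simp
  ring

lemma gderiv_bound (TR s : ℝ) (hTR : 0 < TR) (hs : 0 < s) :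
    |(TR ^ 2 / s ^ 4 - 2 * TR / s ^ 3) * Real.exp (-TR / s)| ≤ 36 / TR ^ 2 := by
  set u := TR / s with hu
  have hu0 : 0 < u := by positivity
  have h4 : u ^ 4 * Real.exp (-u) ≤ 24 := by
    have := pow_exp_le u hu0.le 4
    norm_num [Nat.factorial] at this; linarith
  have h3 : u ^ 3 * Real.exp (-u) ≤ 6 := by
    have := pow_exp_le u hu0.le 3
    norm_num [Nat.factorial] at this; linarith
  have hus : -TR / s = -u := by rw [hu]; ring
  have he : (0:ℝ) < Real.exp (-u) := Real.exp_pos _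
  have e1 : TR ^ 2 / s ^ 4 - 2 * TR / s ^ 3 = (u ^ 4 - 2 * u ^ 3) / TR ^ 2 := by
    rw [hu]; field_simp
  have hT2 : (0:ℝ) < TR ^ 2 := by positivity
  rw [hus, e1, abs_mul, abs_div, abs_of_pos hT2, abs_of_pos he]
  rw [div_mul_eq_mul_div, div_le_div_iff₀ hT2 hT2]
  have habs : |u ^ 4 - 2 * u ^ 3| ≤ u ^ 4 + 2 * u ^ 3 := by
    calc |u ^ 4 - 2 * u ^ 3| ≤ |u ^ 4| + |2 * u ^ 3| := abs_sub _ _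
    _ = u ^ 4 + 2 * u ^ 3 := by
        rw [abs_of_pos (by positivity), abs_of_pos (by positivity)]
  have : (u ^ 4 + 2 * u ^ 3) * Real.exp (-u) ≤ 36 := by nlinarith
  nlinarith [mul_le_mul_of_nonneg_right habs he.le]

lemma gprime_lip (TR a b : ℝ) (hTR : 0 < TR) (ha : 0 < a) (hb : 0 < b) :
    |TR / b ^ 2 * Real.exp (-TR / b) - TR / a ^ 2 * Real.exp (-TR / a)|
      ≤ 36 / TR ^ 2 * |b - a| := by
  have := (convex_Ioi (0:ℝ)).norm_image_sub_le_of_norm_hasDerivWithin_le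
    (f := fun t : ℝ => TR / t ^ 2 * Real.exp (-TR / t))
    (f' := fun s : ℝ => (TR ^ 2 / s ^ 4 - 2 * TR / s ^ 3) * Real.exp (-TR / s))
    (C := 36 / TR ^ 2)
    (fun x hx => (gderiv2 TR x hx).hasDerivWithinAt)
    (fun x hx => by rw [Real.norm_eq_abs]; exact gderiv_bound TR x (by exact hTR) hx)
    ha hb
  simpa [Real.norm_eq_abs] using this

lemma taylor1 (TR : ℝ) (hTR : 0 < TR) (t h : ℝ) (ht : 0 < t) (hth : 0 < t + h) :
    |Real.exp (-TR / (t + h)) - Real.exp (-TR / t)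
      - h * (TR / t ^ 2 * Real.exp (-TR / t))| ≤ 36 / TR ^ 2 * h ^ 2 := by
  have hsub : Set.uIcc t (t + h) ⊆ Set.Ioi (0:ℝ) := by
    intro x hx
    rcases Set.mem_uIcc.mp hx with ⟨h1, _⟩ | ⟨h1, _⟩
    · exact lt_of_lt_of_le ht h1
    · exact lt_of_lt_of_le hth h1
  have key := (convex_uIcc t (t + h)).norm_image_sub_le_of_norm_hasDerivWithin_le
    (f := fun s : ℝ => Real.exp (-TR / s) - s * (TR / t ^ 2 * Real.exp (-TR / t)))
    (f' := fun s : ℝ => TR / s ^ 2 * Real.exp (-TR / s) - TR / t ^ 2 * Real.exp (-TR / t))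
    (C := 36 / TR ^ 2 * |h|)
    (fun x hx => by
      have hx0 : 0 < x := hsub hx
      have hder := ((gderiv TR x hx0).sub
        ((hasDerivAt_id x).mul_const (TR / t ^ 2 * Real.exp (-TR / t))))
      simpa [Pi.sub_def] using hder.hasDerivWithinAt)
    (fun x hx => by
      have hx0 : 0 < x := hsub hx
      have h1 := gprime_lip TR t x hTR ht hx0
      have h2 : |x - t| ≤ |h| := by
        rw [abs_le]
        rcases Set.mem_uIcc.mp hx with ⟨ha, hb⟩ | ⟨ha, hb⟩ <;>
          rcases abs_cases h with ⟨e, s0⟩ | ⟨e, s0⟩ <;> constructor <;> linarith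
      calc ‖TR / x ^ 2 * Real.exp (-TR / x) - TR / t ^ 2 * Real.exp (-TR / t)‖
          ≤ 36 / TR ^ 2 * |x - t| := by simpa [Real.norm_eq_abs] using h1
        _ ≤ 36 / TR ^ 2 * |h| := by gcongr
      )
    Set.left_mem_uIcc Set.right_mem_uIcc
  have e : ((t + h) - t) = h := by ring
  rw [Real.norm_eq_abs, Real.norm_eq_abs, e] at key
  calc |Real.exp (-TR / (t + h)) - Real.exp (-TR / t) - h * (TR / t ^ 2 * Real.exp (-TR / t))|
      = |(Real.exp (-TR / (t+h)) - (t+h) * (TR / t ^ 2 * Real.exp (-TR / t)))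
          - (Real.exp (-TR / t) - t * (TR / t ^ 2 * Real.exp (-TR / t)))| := by ring_nf
    _ ≤ 36 / TR ^ 2 * |h| * |h| := key
    _ = 36 / TR ^ 2 * h ^ 2 := by rw [mul_assoc, ← abs_mul, ← sq, abs_of_nonneg (sq_nonneg h)]

lemma Rphi_t (φ : ℝ) : (Rphi φ)ᵀ =
    !![Real.cos φ, -Real.sin φ, 0; Real.sin φ, Real.cos φ, 0; 0, 0, 1] := by
  ext i j; fin_cases i <;> fin_cases j <;> simp [Rphi, Matrix.vecHead, Matrix.vecTail]

lemma Rx_t (α : ℝ) : (Rx α)ᵀ =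
    !![1, 0, 0; 0, Real.cos α, -Real.sin α; 0, Real.sin α, Real.cos α] := by
  ext i j; fin_cases i <;> fin_cases j <;> simp [Rx, Matrix.vecHead, Matrix.vecTail]

lemma Rphi_orth (φ : ℝ) : (Rphi φ)ᵀ * Rphi φ = 1 := by
  rw [Rphi_t]
  ext i j
  fin_cases i <;> fin_cases j <;>
    simp [Rphi, Matrix.mul_apply, Fin.sum_univ_three, Matrix.one_apply, Matrix.vecHead, Matrix.vecTail, Function.comp] <;>
    nlinarith [Real.sin_sq_add_cos_sq φ]

lemma Rphi_orth' (φ : ℝ) : Rphi φ * (Rphi φ)ᵀ = 1 := by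
  rw [Rphi_t]
  ext i j
  fin_cases i <;> fin_cases j <;>
    simp [Rphi, Matrix.mul_apply, Fin.sum_univ_three, Matrix.one_apply, Matrix.vecHead, Matrix.vecTail, Function.comp] <;>
    nlinarith [Real.sin_sq_add_cos_sq φ]

lemma Rx_orth (α : ℝ) : (Rx α)ᵀ * Rx α = 1 := by
  rw [Rx_t]
  ext i j
  fin_cases i <;> fin_cases j <;>
    simp [Rx, Matrix.mul_apply, Fin.sum_univ_three, Matrix.one_apply, Matrix.vecHead, Matrix.vecTail, Function.comp] <;>
    nlinarith [Real.sin_sq_add_cos_sq α]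

lemma Rmat_orth (φ α : ℝ) : (Rmat φ α)ᵀ * Rmat φ α = 1 := by
  have h : (Rmat φ α)ᵀ * Rmat φ α
      = Rphi φ * ((Rx α)ᵀ * ((Rphi φ)ᵀ * Rphi φ) * Rx α) * (Rphi φ)ᵀ := by
    simp [Rmat, Matrix.transpose_mul, Matrix.mul_assoc]
  rw [h, Rphi_orth, Matrix.mul_one, Rx_orth, Matrix.mul_one, Rphi_orth']

lemma r_normsq (φ α : ℝ) (M0 : Fin 3 → ℝ) :
    ∑ i, ((Rmat φ α *ᵥ M0) i) ^ 2 = ∑ i, (M0 i) ^ 2 := by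
  have h2 : (Rmat φ α *ᵥ M0) ᵥ* Rmat φ α = M0 := by
    rw [← Matrix.transpose_transpose (Rmat φ α), Matrix.vecMul_transpose,
      Matrix.transpose_transpose, Matrix.mulVec_mulVec, Rmat_orth, Matrix.one_mulVec]
  have h1 : (Rmat φ α *ᵥ M0) ⬝ᵥ (Rmat φ α *ᵥ M0) = M0 ⬝ᵥ M0 := by
    rw [Matrix.dotProduct_mulVec, h2]
  simpa [dotProduct, sq] using h1

lemma remainder_eq (TR1 α1 φ1 T1 T2 h1 h2 : ℝ) (M0 : Fin 3 → ℝ) :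
    (M1fun TR1 α1 φ1 M0 (T1 + h1) (T2 + h2) - M1fun TR1 α1 φ1 M0 T1 T2
      - (h1 • (U1 TR1 φ1 α1 T1 *ᵥ M0 - (TR1 / T1 ^ 2 * Real.exp (-TR1 / T1)) • Me)
         + h2 • (U2 TR1 φ1 α1 T2 *ᵥ M0)))
    = ![(Rmat φ1 α1 *ᵥ M0) 0 *
          (Real.exp (-TR1 / (T2 + h2)) - Real.exp (-TR1 / T2)
            - h2 * (TR1 / T2 ^ 2 * Real.exp (-TR1 / T2))),
        (Rmat φ1 α1 *ᵥ M0) 1 *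
          (Real.exp (-TR1 / (T2 + h2)) - Real.exp (-TR1 / T2)
            - h2 * (TR1 / T2 ^ 2 * Real.exp (-TR1 / T2))),
        ((Rmat φ1 α1 *ᵥ M0) 2 - 1) *
          (Real.exp (-TR1 / (T1 + h1)) - Real.exp (-TR1 / T1)
            - h1 * (TR1 / T1 ^ 2 * Real.exp (-TR1 / T1)))] := by
  funext i
  fin_cases i <;>
    simp [M1fun, U1, U2, E1, E2, Me, ← Matrix.mulVec_mulVec, Matrix.vecHead, Matrix.vecTail, Function.comp, Matrix.mulVec_diagonal] <;>
    ring


set_option maxHeartbeats 1000000 in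
/-- Quadratic Taylor remainder estimate for the first IR-bSSFP step: there is a constant
`C > 0` depending only on `TR₁` and `M₀` (not on `θ` or `h`) with
`‖M₁(θ+h) − M₁(θ) − M₁′(θ)h‖ ≤ C ‖h‖²` for all `θ, θ+h ∈ (0,∞)²`. -/
theorem stmt6 (TR1 : ℝ) (hTR1 : 0 < TR1) (M0 : Fin 3 → ℝ) :
    ∃ C > 0, ∀ (α1 φ1 T1 T2 h1 h2 : ℝ),
      0 < T1 → 0 < T2 → 0 < T1 + h1 → 0 < T2 + h2 →
      enorm3 (M1fun TR1 α1 φ1 M0 (T1 + h1) (T2 + h2) - M1fun TR1 α1 φ1 M0 T1 T2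
          - (h1 • (U1 TR1 φ1 α1 T1 *ᵥ M0 - (TR1 / T1 ^ 2 * Real.exp (-TR1 / T1)) • Me)
             + h2 • (U2 TR1 φ1 α1 T2 *ᵥ M0)))
        ≤ C * enorm2 (h1, h2) ^ 2 := by
  set S : ℝ := Real.sqrt (∑ i, (M0 i) ^ 2) with hS
  have hS0 : 0 ≤ S := Real.sqrt_nonneg _
  refine ⟨36 / TR1 ^ 2 * (S + 1), by positivity, ?_⟩
  intro α1 φ1 T1 T2 h1 h2 hT1 hT2 hT1h hT2h
  set L : ℝ := 36 / TR1 ^ 2 with hL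
  have hL0 : 0 < L := by positivity
  set r : Fin 3 → ℝ := Rmat φ1 α1 *ᵥ M0 with hr
  set D1 : ℝ := Real.exp (-TR1 / (T1 + h1)) - Real.exp (-TR1 / T1)
      - h1 * (TR1 / T1 ^ 2 * Real.exp (-TR1 / T1)) with hD1
  set D2 : ℝ := Real.exp (-TR1 / (T2 + h2)) - Real.exp (-TR1 / T2)
      - h2 * (TR1 / T2 ^ 2 * Real.exp (-TR1 / T2)) with hD2
  have hb1 : |D1| ≤ L * h1 ^ 2 := taylor1 TR1 hTR1 T1 h1 hT1 hT1h
  have hb2 : |D2| ≤ L * h2 ^ 2 := taylor1 TR1 hTR1 T2 h2 hT2 hT2h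
  have hrsq : r 0 ^ 2 + r 1 ^ 2 + r 2 ^ 2 = S ^ 2 := by
    have := r_normsq φ1 α1 M0
    rw [Fin.sum_univ_three] at this
    rw [hS, Real.sq_sqrt (by positivity), ← this, hr]
  have hr2 : (r 2 - 1) ^ 2 ≤ (S + 1) ^ 2 := by
    nlinarith [sq_nonneg (r 0), sq_nonneg (r 1), sq_nonneg (r 2 + S), abs_nonneg (r 2),
      sq_abs (r 2), abs_le_abs (le_refl (r 2))]
  have hr01 : r 0 ^ 2 + r 1 ^ 2 ≤ S ^ 2 := by nlinarith [sq_nonneg (r 2)]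
  rw [remainder_eq]
  have hnorm : enorm3 ![r 0 * D2, r 1 * D2, (r 2 - 1) * D1]
      ≤ (S + 1) * (|D1| + |D2|) := by
    rw [enorm3, Fin.sum_univ_three]
    have hle : (r 0 * D2) ^ 2 + (r 1 * D2) ^ 2 + ((r 2 - 1) * D1) ^ 2
        ≤ ((S + 1) * (|D1| + |D2|)) ^ 2 := by
      have m1 : (r 0 ^ 2 + r 1 ^ 2) * D2 ^ 2 ≤ (S + 1) ^ 2 * D2 ^ 2 :=
        mul_le_mul_of_nonneg_right (hr01.trans (by nlinarith)) (sq_nonneg D2)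
      have m2 : (r 2 - 1) ^ 2 * D1 ^ 2 ≤ (S + 1) ^ 2 * D1 ^ 2 :=
        mul_le_mul_of_nonneg_right hr2 (sq_nonneg D1)
      have e1 : |D1| ^ 2 = D1 ^ 2 := sq_abs D1
      have e2 : |D2| ^ 2 = D2 ^ 2 := sq_abs D2
      nlinarith [m1, m2,
        mul_nonneg (sq_nonneg (S + 1)) (mul_nonneg (abs_nonneg D1) (abs_nonneg D2))]
    calc Real.sqrt ((r 0 * D2) ^ 2 + (r 1 * D2) ^ 2 + ((r 2 - 1) * D1) ^ 2)
        ≤ Real.sqrt (((S + 1) * (|D1| + |D2|)) ^ 2) := Real.sqrt_le_sqrt hle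
      _ = (S + 1) * (|D1| + |D2|) := Real.sqrt_sq (by positivity)
  have he2 : enorm2 (h1, h2) ^ 2 = h1 ^ 2 + h2 ^ 2 := by
    rw [enorm2]; exact Real.sq_sqrt (by positivity)
  calc enorm3 ![r 0 * D2, r 1 * D2, (r 2 - 1) * D1]
      ≤ (S + 1) * (|D1| + |D2|) := hnorm
    _ ≤ (S + 1) * (L * h1 ^ 2 + L * h2 ^ 2) := by gcongr
    _ = L * (S + 1) * (h1 ^ 2 + h2 ^ 2) := by ring
    _ = 36 / TR1 ^ 2 * (S + 1) * enorm2 (h1, h2) ^ 2 := by rw [he2, hL]
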